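/- Let G be a group, T ⊆ G a subset closed under conjugation, and t₁,…,tₘ, t ∈ T with t² = 1. Then for any x in the subgroup generated by t₁,…,tₘ, the tuple (t₁,…,tₘ, x t x⁻¹, x t x⁻¹) lies in the same Hurwitz orbit (under the braid group B_{m+2}) as (t₁,…,tₘ, t, t). -/

import Mathlib

/-- The Hurwitz move `σᵢ` (0-based indices). -/
def hurwitzMove {G : Type*} [Group G] {r : ℕ} (i : ℕ) (h : i + 1 < r)
    (g : Fin r → G) : Fin r → G := fun j =>
  if (j : ℕ) = i then g ⟨i + 1, h⟩
  else if (j : ℕ) = i + 1 then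
    (g ⟨i + 1, h⟩)⁻¹ * g ⟨i, Nat.lt_of_succ_lt h⟩ * g ⟨i + 1, h⟩
  else g j

/-- The inverse Hurwitz move `σᵢ⁻¹` (0-based indices). -/
def hurwitzMoveInv {G : Type*} [Group G] {r : ℕ} (i : ℕ) (h : i + 1 < r)
    (g : Fin r → G) : Fin r → G := fun j =>
  if (j : ℕ) = i then
    g ⟨i, Nat.lt_of_succ_lt h⟩ * g ⟨i + 1, h⟩ * (g ⟨i, Nat.lt_of_succ_lt h⟩)⁻¹
  else if (j : ℕ) = i + 1 then g ⟨i, Nat.lt_of_succ_lt h⟩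
  else g j

set_option linter.unusedSectionVars false
section Aux
variable {G : Type*} [Group G] {r m : ℕ}

theorem hurwitzMove_left (i : ℕ) (h : i + 1 < r) (g : Fin r → G) (j : Fin r)
    (hj : (j : ℕ) = i) : hurwitzMove i h g j = g ⟨i + 1, h⟩ := by
  simp [hurwitzMove, hj]

theorem hurwitzMove_right (i : ℕ) (h : i + 1 < r) (g : Fin r → G) (j : Fin r)
    (hj : (j : ℕ) = i + 1) :
    hurwitzMove i h g j = (g ⟨i + 1, h⟩)⁻¹ * g ⟨i, Nat.lt_of_succ_lt h⟩ * g ⟨i + 1, h⟩ := by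
  simp [hurwitzMove, hj]

theorem hurwitzMove_other (i : ℕ) (h : i + 1 < r) (g : Fin r → G) (j : Fin r)
    (hj1 : (j : ℕ) ≠ i) (hj2 : (j : ℕ) ≠ i + 1) : hurwitzMove i h g j = g j := by
  simp [hurwitzMove, hj1, hj2]

theorem hurwitzMoveInv_left (i : ℕ) (h : i + 1 < r) (g : Fin r → G) (j : Fin r)
    (hj : (j : ℕ) = i) :
    hurwitzMoveInv i h g j
      = g ⟨i, Nat.lt_of_succ_lt h⟩ * g ⟨i + 1, h⟩ * (g ⟨i, Nat.lt_of_succ_lt h⟩)⁻¹ := by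
  simp [hurwitzMoveInv, hj]

theorem hurwitzMoveInv_right (i : ℕ) (h : i + 1 < r) (g : Fin r → G) (j : Fin r)
    (hj : (j : ℕ) = i + 1) : hurwitzMoveInv i h g j = g ⟨i, Nat.lt_of_succ_lt h⟩ := by
  simp [hurwitzMoveInv, hj]

theorem hurwitzMoveInv_other (i : ℕ) (h : i + 1 < r) (g : Fin r → G) (j : Fin r)
    (hj1 : (j : ℕ) ≠ i) (hj2 : (j : ℕ) ≠ i + 1) : hurwitzMoveInv i h g j = g j := by
  simp [hurwitzMoveInv, hj1, hj2]

theorem hurwitzMoveInv_move (i : ℕ) (h : i + 1 < r) (g : Fin r → G) :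
    hurwitzMoveInv i h (hurwitzMove i h g) = g := by
  funext j
  rcases eq_or_ne (j : ℕ) i with hj | hj1
  · rw [hurwitzMoveInv_left i h _ j hj,
      hurwitzMove_left i h g ⟨i, Nat.lt_of_succ_lt h⟩ rfl,
      hurwitzMove_right i h g ⟨i + 1, h⟩ rfl,
      show j = ⟨i, Nat.lt_of_succ_lt h⟩ from Fin.ext hj]
    group
  rcases eq_or_ne (j : ℕ) (i + 1) with hj | hj2
  · rw [hurwitzMoveInv_right i h _ j hj,
      hurwitzMove_left i h g ⟨i, Nat.lt_of_succ_lt h⟩ rfl,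
      show j = ⟨i + 1, h⟩ from Fin.ext hj]
  · rw [hurwitzMoveInv_other i h _ j hj1 hj2, hurwitzMove_other i h g j hj1 hj2]

theorem hurwitzMove_moveInv (i : ℕ) (h : i + 1 < r) (g : Fin r → G) :
    hurwitzMove i h (hurwitzMoveInv i h g) = g := by
  funext j
  rcases eq_or_ne (j : ℕ) i with hj | hj1
  · rw [hurwitzMove_left i h _ j hj,
      hurwitzMoveInv_right i h g ⟨i + 1, h⟩ rfl,
      show j = ⟨i, Nat.lt_of_succ_lt h⟩ from Fin.ext hj]
  rcases eq_or_ne (j : ℕ) (i + 1) with hj | hj2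
  · rw [hurwitzMove_right i h _ j hj,
      hurwitzMoveInv_right i h g ⟨i + 1, h⟩ rfl,
      hurwitzMoveInv_left i h g ⟨i, Nat.lt_of_succ_lt h⟩ rfl,
      show j = ⟨i + 1, h⟩ from Fin.ext hj]
    group
  · rw [hurwitzMove_other i h _ j hj1 hj2, hurwitzMoveInv_other i h g j hj1 hj2]

def hRel (m : ℕ) (g g' : Fin (m + 2) → G) : Prop :=
  ∃ (i : ℕ) (h : i + 1 < m + 2), g' = hurwitzMove i h g ∨ g' = hurwitzMoveInv i h g

theorem hRel_symm : Symmetric (hRel (G := G) m) := by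
  rintro g g' ⟨i, h, rfl | rfl⟩
  · exact ⟨i, h, Or.inr (hurwitzMoveInv_move i h g).symm⟩
  · exact ⟨i, h, Or.inl (hurwitzMove_moveInv i h g).symm⟩

def insertPair (ts : Fin m → G) (c : G) (k : ℕ) : Fin (m + 2) → G := fun j =>
  if h1 : (j : ℕ) < k ∧ (j : ℕ) < m then ts ⟨j, h1.2⟩
  else if h2 : (j : ℕ) < k + 2 then c
  else ts ⟨(j : ℕ) - 2, by have := j.isLt; omega⟩

theorem insertPair_top (ts : Fin m → G) (c : G) :
    insertPair ts c m = Fin.snoc (Fin.snoc ts c) c := by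
  funext j
  rcases j with ⟨j, hj⟩
  simp only [insertPair, Fin.snoc, Fin.castLT, Fin.castSucc, Fin.castAdd, Fin.castLE]
  split_ifs with h1 h2 h3 h4 h5 <;> simp_all <;> omega

variable (ts : Fin m → G)

theorem insertPair_lt (c : G) (k : ℕ) (j : Fin (m + 2)) (hjk : (j : ℕ) < k)
    (hjm : (j : ℕ) < m) : insertPair ts c k j = ts ⟨j, hjm⟩ := by
  simp [insertPair, hjk, hjm]

theorem insertPair_mid (c : G) (k : ℕ) (j : Fin (m + 2)) (hjk : k ≤ (j : ℕ))
    (hjk2 : (j : ℕ) < k + 2) : insertPair ts c k j = c := by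
  have : ¬((j : ℕ) < k ∧ (j : ℕ) < m) := by omega
  simp [insertPair, this, hjk2]

theorem insertPair_ge (c : G) (k : ℕ) (j : Fin (m + 2)) (hjk : k + 2 ≤ (j : ℕ))
    (hjm : (j : ℕ) - 2 < m) : insertPair ts c k j = ts ⟨(j : ℕ) - 2, hjm⟩ := by
  have h1 : ¬((j : ℕ) < k ∧ (j : ℕ) < m) := by omega
  have h2 : ¬((j : ℕ) < k + 2) := by omega
  simp [insertPair, h1, h2]

theorem pairMoveDown (c : G) (hc : c * c = 1) (k : ℕ) (hk : k + 1 ≤ m) :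
    hurwitzMove (k + 1) (by omega) (hurwitzMove k (by omega) (insertPair ts c (k + 1)))
      = insertPair ts c k := by
  set g := insertPair ts c (k + 1) with hg
  have hgk : g ⟨k, by omega⟩ = ts ⟨k, by omega⟩ := by
    rw [hg, insertPair_lt ts c (k+1) _ (by simp) (by simpa using hk)]
  have hgk1 : g ⟨k + 1, by omega⟩ = c :=
    insertPair_mid ts c (k+1) _ (by simp) (by simp)
  have hgk2 : g ⟨k + 2, by omega⟩ = c :=
    insertPair_mid ts c (k+1) _ (by simp) (by simp)
  funext j
  rcases eq_or_ne (j : ℕ) k with hj | hj0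
  · rw [hurwitzMove_other (k+1) (by omega) _ j (by omega) (by omega),
      hurwitzMove_left k (by omega) _ j hj, hgk1,
      insertPair_mid ts c k j (by omega) (by omega)]
  rcases eq_or_ne (j : ℕ) (k + 1) with hj | hj1
  · rw [hurwitzMove_left (k+1) (by omega) _ j hj,
      hurwitzMove_other k (by omega) g ⟨k + 2, by omega⟩ (by simp) (by simp),
      hgk2, insertPair_mid ts c k j (by omega) (by omega)]
  rcases eq_or_ne (j : ℕ) (k + 2) with hj | hj2
  · rw [hurwitzMove_right (k+1) (by omega) _ j hj,
      hurwitzMove_other k (by omega) g ⟨k + 2, by omega⟩ (by simp) (by simp),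
      hurwitzMove_right k (by omega) g ⟨k + 1, by omega⟩ (by simp),
      hgk2, hgk, hgk1, insertPair_ge ts c k j (by omega) (by omega)]
    have hcinv : c⁻¹ = c := inv_eq_of_mul_eq_one_right hc
    have hjv : (j : ℕ) - 2 = k := by omega
    rw [hcinv, show c * (c * ts ⟨k, by omega⟩ * c) * c
        = (c * c) * ts ⟨k, by omega⟩ * (c * c) by group, hc]
    have : (⟨(j : ℕ) - 2, by omega⟩ : Fin m) = ⟨k, by omega⟩ := Fin.ext hjv
    rw [this]; group
  · rw [hurwitzMove_other (k+1) (by omega) _ j (by omega) (by omega),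
      hurwitzMove_other k (by omega) g j hj0 hj1]
    rcases lt_or_ge (j : ℕ) k with h | h
    · rw [hg, insertPair_lt ts c (k+1) j (by omega) (by omega),
        insertPair_lt ts c k j (by omega) (by omega)]
    · rw [hg, insertPair_ge ts c (k+1) j (by omega) (by have := j.isLt; omega),
        insertPair_ge ts c k j (by omega) (by have := j.isLt; omega)]

theorem pairMoveDown_rel (c : G) (hc : c * c = 1) (k : ℕ) (hk : k + 1 ≤ m) :
    Relation.ReflTransGen (hRel m) (insertPair ts c (k + 1)) (insertPair ts c k) := by
  have h1 : hRel m (insertPair ts c (k + 1))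
      (hurwitzMove k (by omega) (insertPair ts c (k + 1))) :=
    ⟨k, by omega, Or.inl rfl⟩
  have h2 : hRel m (hurwitzMove k (by omega) (insertPair ts c (k + 1)))
      (insertPair ts c k) :=
    ⟨k + 1, by omega, Or.inl (pairMoveDown ts c hc k hk).symm⟩
  exact Relation.ReflTransGen.head h1 (Relation.ReflTransGen.single h2)

theorem chainDown (c : G) (hc : c * c = 1) :
    ∀ d k, k + d ≤ m →
      Relation.ReflTransGen (hRel m) (insertPair ts c (k + d)) (insertPair ts c k) := by
  intro d
  induction d with
  | zero => intro k _; exact Relation.ReflTransGen.refl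
  | succ d ih =>
    intro k hk
    have h1 := pairMoveDown_rel ts c hc (k + d) (by omega)
    have h2 := ih k (by omega)
    exact Relation.ReflTransGen.trans
      (by rw [show k + (d + 1) = k + d + 1 by omega]; exact h1) h2

theorem conjStep (c : G) (i : ℕ) (hi : i < m) :
    hurwitzMove i (by omega) (hurwitzMove (i + 1) (by omega) (insertPair ts c i))
      = insertPair ts ((ts ⟨i, hi⟩)⁻¹ * c * ts ⟨i, hi⟩) (i + 1) := by
  set s := ts ⟨i, hi⟩ with hs
  set g := insertPair ts c i with hg
  have hgi : g ⟨i, by omega⟩ = c := insertPair_mid ts c i _ (by simp) (by simp)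
  have hgi1 : g ⟨i + 1, by omega⟩ = c := insertPair_mid ts c i _ (by simp) (by simp)
  have hgi2 : g ⟨i + 2, by omega⟩ = s := by
    rw [hg, insertPair_ge ts c i _ (by simp) (by simpa using hi)]
    simp [hs]
  funext j
  rcases eq_or_ne (j : ℕ) i with hj | hj0
  · rw [hurwitzMove_left i (by omega) _ j hj,
      hurwitzMove_left (i+1) (by omega) g ⟨i + 1, by omega⟩ (by simp), hgi2,
      insertPair_lt ts _ (i+1) j (by omega) (by omega)]
    exact congrArg ts (Fin.ext (by simp [hj]))
  rcases eq_or_ne (j : ℕ) (i + 1) with hj | hj1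
  · rw [hurwitzMove_right i (by omega) _ j hj,
      hurwitzMove_left (i+1) (by omega) g ⟨i + 1, by omega⟩ (by simp), hgi2,
      hurwitzMove_other (i+1) (by omega) g ⟨i, by omega⟩ (by simp) (by simp; omega),
      hgi, insertPair_mid ts _ (i+1) j (by omega) (by omega)]
  rcases eq_or_ne (j : ℕ) (i + 2) with hj | hj2
  · rw [hurwitzMove_other i (by omega) _ j (by omega) (by omega),
      hurwitzMove_right (i+1) (by omega) g j hj, hgi1, hgi2,
      insertPair_mid ts _ (i+1) j (by omega) (by omega)]
  · rw [hurwitzMove_other i (by omega) _ j hj0 hj1,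
      hurwitzMove_other (i+1) (by omega) g j hj1 hj2]
    rcases lt_or_ge (j : ℕ) i with h | h
    · rw [hg, insertPair_lt ts c i j (by omega) (by omega),
        insertPair_lt ts _ (i+1) j (by omega) (by omega)]
    · rw [hg, insertPair_ge ts c i j (by omega) (by have := j.isLt; omega),
        insertPair_ge ts _ (i+1) j (by omega) (by have := j.isLt; omega)]

theorem mainStep (c : G) (hc : c * c = 1) (i : Fin m) :
    Relation.ReflTransGen (hRel m) (insertPair ts c m)
      (insertPair ts ((ts i)⁻¹ * c * ts i) m) := by
  have hi : (i : ℕ) < m := i.isLt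
  set c' := (ts i)⁻¹ * c * ts i with hc'
  have hc'2 : c' * c' = 1 := by
    rw [hc', show (ts i)⁻¹ * c * ts i * ((ts i)⁻¹ * c * ts i)
      = (ts i)⁻¹ * (c * c) * ts i by group, hc]; group
  have h1 : Relation.ReflTransGen (hRel m) (insertPair ts c m) (insertPair ts c i) := by
    have := chainDown ts c hc (m - i) i (by omega)
    rwa [show (i : ℕ) + (m - i) = m by omega] at this
  have h2 : Relation.ReflTransGen (hRel m) (insertPair ts c i) (insertPair ts c' (i + 1)) := by
    refine Relation.ReflTransGen.head ⟨(i : ℕ) + 1, by omega, Or.inl rfl⟩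
      (Relation.ReflTransGen.single ⟨i, by omega, Or.inl ?_⟩)
    rw [conjStep ts c i hi]
  have h3 : Relation.ReflTransGen (hRel m) (insertPair ts c' (i + 1)) (insertPair ts c' m) := by
    have := chainDown ts c' hc'2 (m - ((i : ℕ) + 1)) ((i : ℕ) + 1) (by omega)
    rw [show (i : ℕ) + 1 + (m - ((i : ℕ) + 1)) = m by omega] at this
    exact (@Relation.ReflTransGen.symmetric _ _ ⟨hRel_symm⟩).symm _ _ this
  exact (h1.trans h2).trans h3

end Aux

/-- Let `G` be a group, `T ⊆ G` closed under conjugation, `t₁,…,tₘ, t ∈ T` with `t² = 1`.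
For any `x` in the subgroup generated by `t₁,…,tₘ`, the tuple `(t₁,…,tₘ, x t x⁻¹, x t x⁻¹)`
lies in the same Hurwitz orbit (under `B_{m+2}`) as `(t₁,…,tₘ, t, t)`. -/
theorem stmt_8 {G : Type*} [Group G] (T : Set G)
    (hT : ∀ g t, t ∈ T → g * t * g⁻¹ ∈ T)
    (m : ℕ) (ts : Fin m → G) (hts : ∀ i, ts i ∈ T)
    (t : G) (ht : t ∈ T) (ht2 : t * t = 1)
    (x : G) (hx : x ∈ Subgroup.closure (Set.range ts)) :
    Relation.ReflTransGen
      (fun g g' : Fin (m + 2) → G =>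
        ∃ (i : ℕ) (h : i + 1 < m + 2), g' = hurwitzMove i h g ∨ g' = hurwitzMoveInv i h g)
      (Fin.snoc (Fin.snoc ts t) t)
      (Fin.snoc (Fin.snoc ts (x * t * x⁻¹)) (x * t * x⁻¹)) := by
  have sq : ∀ y : G, (y * t * y⁻¹) * (y * t * y⁻¹) = 1 := by
    intro y
    rw [show (y * t * y⁻¹) * (y * t * y⁻¹) = y * (t * t) * y⁻¹ by group, ht2]
    group
  have key : Relation.ReflTransGen (hRel m) (insertPair ts t m)
      (insertPair ts (x * t * x⁻¹) m) := by
    induction hx using Subgroup.closure_induction_left with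
    | one => simpa using Relation.ReflTransGen.refl
    | mul_left s hs y hy ih =>
      obtain ⟨i, rfl⟩ := hs
      refine ih.trans ?_
      have h1 := mainStep ts (ts i * (y * t * y⁻¹) * (ts i)⁻¹)
        (by rw [show ts i * (y * t * y⁻¹) * (ts i)⁻¹
            = (ts i * y) * t * (ts i * y)⁻¹ by group]; exact sq _) i
      rw [show (ts i)⁻¹ * (ts i * (y * t * y⁻¹) * (ts i)⁻¹) * ts i
          = y * t * y⁻¹ by group] at h1
      have h2 := (@Relation.ReflTransGen.symmetric _ _ ⟨hRel_symm⟩).symm _ _ h1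
      rw [show ts i * (y * t * y⁻¹) * (ts i)⁻¹
          = ts i * y * t * (ts i * y)⁻¹ by group] at h2
      exact h2
    | inv_mul_cancel s hs y hy ih =>
      obtain ⟨i, rfl⟩ := hs
      refine ih.trans ?_
      have h1 := mainStep ts (y * t * y⁻¹) (sq y) i
      rw [show (ts i)⁻¹ * (y * t * y⁻¹) * ts i
          = (ts i)⁻¹ * y * t * ((ts i)⁻¹ * y)⁻¹ by group] at h1
      exact h1
  rw [insertPair_top ts t, insertPair_top ts (x * t * x⁻¹)] at key
  exact key
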